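/- arXiv:2007.14505 — 2 statements merged into one kernel-verified Lean document; each statement's English description precedes it below -/
import Mathlib

section
/- Let U be an n-molecule with spherical boundary, n > 0. Then (a) U is pure (all maximal elements have dimension n), (b) Δ^+ U and Δ^− U are disjoint and both inhabited, and (c) every element of Δ^+ U ∪ Δ^− U is covered by exactly one element of U. -/
/-- An oriented graded poset: a finite graded poset together with an
orientation (edge-labelling of the Hasse diagram in `Bool`, `true` = `+`,
`false` = `-`).  `orient y x` is the label of the edge `y → x` when `x ⋖ y`. -/
structure OGP where
  carrier : Type
  [po : PartialOrder carrier]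
  [fin : Finite carrier]
  dim : carrier → ℕ
  graded : ∀ x y : carrier, x ⋖ y → dim y = dim x + 1
  min_dim : ∀ x : carrier, IsMin x → dim x = 0
  orient : carrier → carrier → Bool

attribute [instance] OGP.po OGP.fin

namespace OGP

variable (P : OGP)

/-- Downward closure of a subset. -/
def cl (U : Set P.carrier) : Set P.carrier := {x | ∃ y ∈ U, x ≤ y}

/-- A subset is closed if it is downward closed. -/
def IsClosed (U : Set P.carrier) : Prop := P.cl U ⊆ U

/-- `Δₙ^α U`: the `n`-dimensional elements of `U` all of whose covering
elements in `U` cover with sign `α`. -/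
def sb (n : ℕ) (α : Bool) (U : Set P.carrier) : Set P.carrier :=
  {x | x ∈ U ∧ P.dim x = n ∧ ∀ y ∈ U, x ⋖ y → P.orient y x = α}

/-- The boundary `∂ₙ^α U`. -/
def bd (n : ℕ) (α : Bool) (U : Set P.carrier) : Set P.carrier :=
  P.cl (P.sb n α U) ∪ {x | x ∈ U ∧ ∀ y ∈ U, x ≤ y → P.dim y ≤ n}

/-- Dimension of a subset (the maximum of the dimensions of its elements;
`0` if empty). -/
noncomputable def sdim (U : Set P.carrier) : ℕ := sSup (P.dim '' U)

end OGP

/-- A map of oriented graded posets: a function commuting with all boundary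
operators `∂ₙ^α` on closures of points. -/
def IsMap (P Q : OGP) (f : P.carrier → Q.carrier) : Prop :=
  ∀ (x : P.carrier) (n : ℕ) (α : Bool),
    Q.bd n α (Q.cl {f x}) = f '' (P.bd n α (P.cl {x}))

/-- Molecules in an oriented graded poset, defined inductively: atoms
(closed subsets with a greatest element), and pastings `U₁ ∪ U₂` of two
molecules properly contained in the union with
`U₁ ∩ U₂ = ∂ₖ^+ U₁ = ∂ₖ^- U₂`. -/
inductive IsMolecule (P : OGP) : Set P.carrier → Prop
  | atom : ∀ U : Set P.carrier, P.IsClosed U → (∃ x ∈ U, ∀ y ∈ U, y ≤ x) →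
      IsMolecule P U
  | paste : ∀ (U₁ U₂ : Set P.carrier) (k : ℕ),
      IsMolecule P U₁ → IsMolecule P U₂ →
      U₁ ∩ U₂ = P.bd k true U₁ → U₁ ∩ U₂ = P.bd k false U₂ →
      U₁ ≠ U₁ ∪ U₂ → U₂ ≠ U₁ ∪ U₂ →
      IsMolecule P (U₁ ∪ U₂)

/-- `∂^α x`: the boundary of the closure of a single element. -/
def OGP.bdx (P : OGP) (α : Bool) (x : P.carrier) : Set P.carrier :=
  P.bd (P.dim x - 1) α (P.cl {x})

/-- A directed complex: every `∂^α x` is a molecule, and globularity holds. -/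
def IsDirectedComplex (P : OGP) : Prop :=
  ∀ (x : P.carrier) (α : Bool),
    IsMolecule P (P.bdx α x) ∧
    (1 < P.dim x → ∀ β : Bool,
      P.bd (P.dim x - 2) α (P.bdx β x) = P.bd (P.dim x - 2) α (P.cl {x}))

/-- An `n`-molecule `U` has spherical boundary iff for all `k < n`,
`∂ₖ^+ U ∩ ∂ₖ^- U = ∂ₖ₋₁ U` (for `k = 0` the right-hand side is empty). -/
def HasSphericalBoundary (P : OGP) (n : ℕ) (U : Set P.carrier) : Prop :=
  (∀ k : ℕ, 0 < k → k < n →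
      P.bd k true U ∩ P.bd k false U = P.bd (k - 1) true U ∪ P.bd (k - 1) false U) ∧
  (0 < n → P.bd 0 true U ∩ P.bd 0 false U = ∅)

/-- A regular directed complex: a directed complex all of whose atoms have
spherical boundary. -/
def IsRegularDC (P : OGP) : Prop :=
  IsDirectedComplex P ∧ ∀ x : P.carrier, HasSphericalBoundary P (P.dim x) (P.cl {x})

section Aux
variable {P : OGP}

lemma aux_exists_covby_le {x y : P.carrier} (h : x < y) : ∃ z, x ⋖ z ∧ z ≤ y := by
  obtain ⟨z, hz, hmin⟩ :=
    (wellFounded_lt : WellFounded (· < · : P.carrier → P.carrier → Prop)).has_min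
      {z | x < z ∧ z ≤ y} ⟨y, h, le_rfl⟩
  exact ⟨z, ⟨hz.1, fun w hxw hwz => hmin w ⟨hxw, hwz.le.trans hz.2⟩ hwz⟩, hz.2⟩

lemma aux_dim_lt : ∀ x y : P.carrier, x < y → P.dim x < P.dim y := by
  have wf : WellFounded (· > · : P.carrier → P.carrier → Prop) := wellFounded_gt
  intro x
  refine WellFounded.induction wf (C := fun x => ∀ y, x < y → P.dim x < P.dim y) x ?_
  intro x ih y h
  obtain ⟨z, hcov, hzy⟩ := aux_exists_covby_le h
  have hz := P.graded x z hcov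
  rcases eq_or_lt_of_le hzy with rfl | hlt
  · omega
  · have := ih z hcov.lt y hlt; omega

lemma aux_dim_le {x y : P.carrier} (h : x ≤ y) : P.dim x ≤ P.dim y := by
  rcases eq_or_lt_of_le h with rfl | h
  · exact le_rfl
  · exact (aux_dim_lt x y h).le

lemma aux_mol_closed {U : Set P.carrier} (h : IsMolecule P U) : P.IsClosed U := by
  induction h with
  | atom U hc _ => exact hc
  | paste U₁ U₂ k h1 h2 _ _ _ _ ih1 ih2 =>
    rintro x ⟨y, hy, hxy⟩
    rcases hy with hy | hy
    · exact Or.inl (ih1 ⟨y, hy, hxy⟩)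
    · exact Or.inr (ih2 ⟨y, hy, hxy⟩)

lemma aux_mol_nonempty {U : Set P.carrier} (h : IsMolecule P U) : U.Nonempty := by
  induction h with
  | atom U _ hm => obtain ⟨x, hx, _⟩ := hm; exact ⟨x, hx⟩
  | paste U₁ U₂ k h1 h2 _ _ _ _ ih1 ih2 => obtain ⟨x, hx⟩ := ih1; exact ⟨x, Or.inl hx⟩

lemma aux_dim_le_of_mem_bd {V : Set P.carrier} {k : ℕ} {α : Bool} {x : P.carrier}
    (h : x ∈ P.bd k α V) : P.dim x ≤ k := by
  rcases h with ⟨z, hz, hxz⟩ | h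
  · exact (aux_dim_le hxz).trans (le_of_eq hz.2.1)
  · exact h.2 x h.1 le_rfl

lemma aux_mem_sb_of_cl {V : Set P.carrier} {k : ℕ} {α : Bool} {x : P.carrier}
    (h : x ∈ P.cl (P.sb k α V)) (hd : P.dim x = k) : x ∈ P.sb k α V := by
  obtain ⟨z, hz, hxz⟩ := h
  rcases eq_or_lt_of_le hxz with rfl | hlt
  · exact hz
  · exact absurd (aux_dim_lt x z hlt) (by rw [hd, hz.2.1]; omega)


/-- In a pasting, elements of the intersection have dimension ≤ k. -/
lemma aux_int_dim {U₁ U₂ : Set P.carrier} {k : ℕ}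
    (hbd : U₁ ∩ U₂ = P.bd k true U₁) {x : P.carrier} (hx : x ∈ U₁ ∩ U₂) :
    P.dim x ≤ k :=
  aux_dim_le_of_mem_bd (hbd ▸ hx)

/-- If all dimensions of U₁ are ≤ k, then U₁ ⊆ bd k α U₁. -/
lemma aux_sub_bd {U₁ : Set P.carrier} {k : ℕ} {α : Bool}
    (h : ∀ x ∈ U₁, P.dim x ≤ k) : U₁ ⊆ P.bd k α U₁ :=
  fun x hx => Or.inr ⟨hx, fun y hy _ => h y hy⟩

/-- key nonemptiness lemma -/
lemma aux_sb_nonempty (hP : IsDirectedComplex P) {U : Set P.carrier}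
    (hU : IsMolecule P U) :
    ∀ m : ℕ, 0 < m → (∀ y ∈ U, P.dim y ≤ m) → (∃ y ∈ U, P.dim y = m) →
    ∀ α : Bool, (P.sb (m - 1) α U).Nonempty := by
  induction hU with
  | atom U hcl hmax =>
    intro m hm hdle hex α
    obtain ⟨t, htU, htmax⟩ := hmax
    obtain ⟨y, hyU, hym⟩ := hex
    have htm : P.dim t = m :=
      le_antisymm (hdle t htU) (hym ▸ aux_dim_le (htmax y hyU))
    have hUeq : U = P.cl {t} := by
      ext z
      constructor
      · intro hz; exact ⟨t, rfl, htmax z hz⟩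
      · rintro ⟨w, hw, hzw⟩
        rcases hw with rfl
        exact hcl ⟨w, htU, hzw⟩
    have hmol : IsMolecule P (P.bdx α t) := (hP t α).1
    obtain ⟨w, hw⟩ := aux_mol_nonempty hmol
    rw [OGP.bdx, htm, ← hUeq] at hw
    rcases hw with ⟨z, hz, _⟩ | hw
    · exact ⟨z, hz⟩
    · exact absurd (hw.2 t htU (htmax w hw.1)) (by omega)
  | paste U₁ U₂ k₀ h1 h2 hbd1 hbd2 hne1 hne2 ih1 ih2 =>
    intro m hm hdle hex α
    have hdle1 : ∀ y ∈ U₁, P.dim y ≤ m := fun y h => hdle y (Or.inl h)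
    have hdle2 : ∀ y ∈ U₂, P.dim y ≤ m := fun y h => hdle y (Or.inr h)
    have hcl1 := aux_mol_closed h1
    have hcl2 := aux_mol_closed h2
    have hint : ∀ x ∈ U₁ ∩ U₂, P.dim x ≤ k₀ := fun x hx => aux_int_dim hbd1 hx
    have hsub1 : ¬ (∀ x ∈ U₁, P.dim x ≤ k₀) := by
      intro hall
      exact hne2 (by
        have h12 : U₁ ⊆ U₂ := fun x hx => ((hbd1 ▸ aux_sub_bd hall hx) : x ∈ U₁ ∩ U₂).2
        rw [Set.union_eq_self_of_subset_left h12])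
    have hsub2 : ¬ (∀ x ∈ U₂, P.dim x ≤ k₀) := by
      intro hall
      exact hne1 (by
        have h21 : U₂ ⊆ U₁ := fun x hx => ((hbd2 ▸ aux_sub_bd hall hx) : x ∈ U₁ ∩ U₂).1
        rw [Set.union_eq_self_of_subset_right h21])
    have hk0 : k₀ < m := by
      by_contra hk
      exact hsub1 fun x hx => (hdle1 x hx).trans (by omega)
    by_cases hkm : k₀ + 1 = m
    · -- pasting at the top dimension
      have hex1 : ∃ y ∈ U₁, P.dim y = m := by
        by_contra h
        push_neg at h
        exact hsub1 fun x hx => by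
          have := hdle1 x hx; have := h x hx; omega
      have hex2 : ∃ y ∈ U₂, P.dim y = m := by
        by_contra h
        push_neg at h
        exact hsub2 fun x hx => by
          have := hdle2 x hx; have := h x hx; omega
      cases α with
      | true =>
        obtain ⟨x, hx⟩ := ih2 m hm hdle2 hex2 true
        refine ⟨x, Or.inr hx.1, hx.2.1, ?_⟩
        intro y hy hcov
        rcases hy with hy | hy
        · -- y ∈ U₁ : x ∈ U₁ ∩ U₂ = bd k₀ true U₁
          have hxU1 : x ∈ U₁ := hcl1 ⟨y, hy, hcov.le⟩
          have hmem : x ∈ P.bd k₀ true U₁ := hbd1 ▸ (⟨hxU1, hx.1⟩ : x ∈ U₁ ∩ U₂)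
          rcases hmem with hmem | hmem
          · have hdx : P.dim x = k₀ := by have := hx.2.1; omega
            exact (aux_mem_sb_of_cl hmem hdx).2.2 y hy hcov
          · exact absurd (hmem.2 y hy hcov.le) (by have := P.graded x y hcov; have := hx.2.1; omega)
        · exact hx.2.2 y hy hcov
      | false =>
        obtain ⟨x, hx⟩ := ih1 m hm hdle1 hex1 false
        refine ⟨x, Or.inl hx.1, hx.2.1, ?_⟩
        intro y hy hcov
        rcases hy with hy | hy
        · exact hx.2.2 y hy hcov
        · have hxU2 : x ∈ U₂ := hcl2 ⟨y, hy, hcov.le⟩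
          have hmem : x ∈ P.bd k₀ false U₂ := hbd2 ▸ (⟨hx.1, hxU2⟩ : x ∈ U₁ ∩ U₂)
          rcases hmem with hmem | hmem
          · have hdx : P.dim x = k₀ := by have := hx.2.1; omega
            exact (aux_mem_sb_of_cl hmem hdx).2.2 y hy hcov
          · exact absurd (hmem.2 y hy hcov.le) (by have := P.graded x y hcov; have := hx.2.1; omega)
    · -- pasting below the top dimension : k₀ + 1 < m
      have hk1 : k₀ + 1 < m := by omega
      obtain ⟨y, hyU, hym⟩ := hex
      rcases hyU with hyU | hyU
      · obtain ⟨x, hx⟩ := ih1 m hm hdle1 ⟨y, hyU, hym⟩ α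
        refine ⟨x, Or.inl hx.1, hx.2.1, ?_⟩
        intro z hz hcov
        rcases hz with hz | hz
        · exact hx.2.2 z hz hcov
        · have hxU2 : x ∈ U₂ := hcl2 ⟨z, hz, hcov.le⟩
          have := hint x ⟨hx.1, hxU2⟩
          exact absurd this (by have := hx.2.1; omega)
      · obtain ⟨x, hx⟩ := ih2 m hm hdle2 ⟨y, hyU, hym⟩ α
        refine ⟨x, Or.inr hx.1, hx.2.1, ?_⟩
        intro z hz hcov
        rcases hz with hz | hz
        · have hxU1 : x ∈ U₁ := hcl1 ⟨z, hz, hcov.le⟩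
          have := hint x ⟨hxU1, hx.1⟩
          exact absurd this (by have := hx.2.1; omega)
        · exact hx.2.2 z hz hcov


/-- key uniqueness lemma: in a molecule with dimensions ≤ m, a top-codimension
element has at most one cover with a given orientation. -/
lemma aux_cov_unique {U : Set P.carrier} (hU : IsMolecule P U) :
    ∀ m : ℕ, (∀ y ∈ U, P.dim y ≤ m) →
    ∀ x y₁ y₂ : P.carrier, y₁ ∈ U → y₂ ∈ U → x ⋖ y₁ → x ⋖ y₂ →
    P.dim y₁ = m → P.orient y₁ x = P.orient y₂ x → y₁ = y₂ := by
  induction hU with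
  | atom U hcl hmax =>
    intro m hdle x y₁ y₂ h1 h2 hc1 hc2 hdim hor
    obtain ⟨t, htU, htmax⟩ := hmax
    have hd2 : P.dim y₂ = m := by
      have := P.graded x y₁ hc1; have := P.graded x y₂ hc2; omega
    have e1 : y₁ = t := by
      rcases eq_or_lt_of_le (htmax y₁ h1) with h | h
      · exact h
      · exact absurd (aux_dim_lt _ _ h) (by have := hdle t htU; omega)
    have e2 : y₂ = t := by
      rcases eq_or_lt_of_le (htmax y₂ h2) with h | h
      · exact h
      · exact absurd (aux_dim_lt _ _ h) (by have := hdle t htU; omega)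
    rw [e1, e2]
  | paste U₁ U₂ k₀ h1 h2 hbd1 hbd2 hne1 hne2 ih1 ih2 =>
    intro m hdle x y₁ y₂ hy1 hy2 hc1 hc2 hdim hor
    have hdle1 : ∀ y ∈ U₁, P.dim y ≤ m := fun y h => hdle y (Or.inl h)
    have hdle2 : ∀ y ∈ U₂, P.dim y ≤ m := fun y h => hdle y (Or.inr h)
    have hcl1 := aux_mol_closed h1
    have hcl2 := aux_mol_closed h2
    have hd2 : P.dim y₂ = m := by
      have := P.graded x y₁ hc1; have := P.graded x y₂ hc2; omega
    have hk0 : k₀ < m ∨ (∀ z ∈ U₁, P.dim z ≤ k₀) := by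
      rcases lt_or_ge k₀ m with h | h
      · exact Or.inl h
      · exact Or.inr fun z hz => (hdle1 z hz).trans h
    have hsub1 : ¬ (∀ z ∈ U₁, P.dim z ≤ k₀) := by
      intro hall
      exact hne2 (by
        have h12 : U₁ ⊆ U₂ := fun z hz => ((hbd1 ▸ aux_sub_bd hall hz) : z ∈ U₁ ∩ U₂).2
        rw [Set.union_eq_self_of_subset_left h12])
    have hk0' : k₀ < m := hk0.resolve_right hsub1
    -- mixed-case helper: if y₁' ∈ U₁ \ U₂ and y₂' ∈ U₂ \ U₁ both cover x,
    -- then the orientations differ.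
    have mixed : ∀ z₁ z₂ : P.carrier, z₁ ∈ U₁ → z₁ ∉ U₂ → z₂ ∈ U₂ → z₂ ∉ U₁ →
        x ⋖ z₁ → x ⋖ z₂ → P.orient z₁ x = true ∧ P.orient z₂ x = false := by
      intro z₁ z₂ hz1 hz1' hz2 hz2' hcz1 hcz2
      have hxU : x ∈ U₁ ∩ U₂ := ⟨hcl1 ⟨z₁, hz1, hcz1.le⟩, hcl2 ⟨z₂, hz2, hcz2.le⟩⟩
      have hxk : P.dim x ≤ k₀ := aux_int_dim hbd1 hxU
      have hdx : P.dim x = k₀ := by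
        have hz1m : P.dim z₁ ≤ m := hdle1 z₁ hz1
        have := P.graded x z₁ hcz1
        -- dim x = dim z₁ - 1; need dim x ≥ k₀?  We know dim y₁ = m = dim x + 1.
        have := P.graded x y₁ hc1
        omega
      constructor
      · have hmem : x ∈ P.bd k₀ true U₁ := hbd1 ▸ hxU
        rcases hmem with hmem | hmem
        · exact (aux_mem_sb_of_cl hmem hdx).2.2 z₁ hz1 hcz1
        · exact absurd (hmem.2 z₁ hz1 hcz1.le)
            (by have := P.graded x z₁ hcz1; omega)
      · have hmem : x ∈ P.bd k₀ false U₂ := hbd2 ▸ hxU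
        rcases hmem with hmem | hmem
        · exact (aux_mem_sb_of_cl hmem hdx).2.2 z₂ hz2 hcz2
        · exact absurd (hmem.2 z₂ hz2 hcz2.le)
            (by have := P.graded x z₂ hcz2; omega)
    rcases hy1 with hy1 | hy1 <;> rcases hy2 with hy2 | hy2
    · exact ih1 m hdle1 x y₁ y₂ hy1 hy2 hc1 hc2 hdim hor
    · by_cases hy2' : y₂ ∈ U₁
      · exact ih1 m hdle1 x y₁ y₂ hy1 hy2' hc1 hc2 hdim hor
      · by_cases hy1' : y₁ ∈ U₂
        · exact ih2 m hdle2 x y₁ y₂ hy1' hy2 hc1 hc2 hdim hor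
        · obtain ⟨ht, hf⟩ := mixed y₁ y₂ hy1 hy1' hy2 hy2' hc1 hc2
          rw [ht, hf] at hor
          exact absurd hor (by simp)
    · by_cases hy1'' : y₁ ∈ U₁
      · exact ih1 m hdle1 x y₁ y₂ hy1'' hy2 hc1 hc2 hdim hor
      · by_cases hy2'' : y₂ ∈ U₂
        · exact ih2 m hdle2 x y₁ y₂ hy1 hy2'' hc1 hc2 hdim hor
        · obtain ⟨ht, hf⟩ := mixed y₂ y₁ hy2 hy2'' hy1 hy1'' hc2 hc1
          rw [ht, hf] at hor
          exact absurd hor (by simp)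
    · exact ih2 m hdle2 x y₁ y₂ hy1 hy2 hc1 hc2 hdim hor


end Aux

/-- an `n`-molecule with spherical boundary (`n > 0`) is pure,
`Δ⁺U` and `Δ⁻U` are disjoint and inhabited, and every element of
`Δ⁺U ∪ Δ⁻U` is covered by exactly one element. -/
theorem stmt7 (P : OGP) (hP : IsDirectedComplex P) (U : Set P.carrier) (n : ℕ)
    (hn : 0 < n) (hU : IsMolecule P U)
    (hd : ∀ y ∈ U, P.dim y ≤ n) (he : ∃ y ∈ U, P.dim y = n)
    (hs : HasSphericalBoundary P n U) :
    (∀ x ∈ U, (∀ y ∈ U, x ≤ y → y = x) → P.dim x = n) ∧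
    (P.sb (n - 1) true U ∩ P.sb (n - 1) false U = ∅) ∧
    (P.sb (n - 1) true U).Nonempty ∧ (P.sb (n - 1) false U).Nonempty ∧
    (∀ x ∈ P.sb (n - 1) true U ∪ P.sb (n - 1) false U,
      ∃! y : P.carrier, y ∈ U ∧ x ⋖ y) := by
  have hcl := aux_mol_closed hU
  -- (a) purity
  have pure : ∀ x ∈ U, (∀ y ∈ U, x ≤ y → y = x) → P.dim x = n := by
    intro x hxU hxmax
    by_contra hne
    have hk : P.dim x < n := lt_of_le_of_ne (hd x hxU) hne
    have hM : ∀ α : Bool, x ∈ P.bd (P.dim x) α U := fun α =>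
      Or.inr ⟨hxU, fun y hy hle => le_of_eq (by rw [hxmax y hy hle])⟩
    rcases Nat.eq_zero_or_pos (P.dim x) with h0 | hpos
    · have := hs.2 hn
      have hx : x ∈ P.bd 0 true U ∩ P.bd 0 false U := ⟨h0 ▸ hM true, h0 ▸ hM false⟩
      rw [this] at hx
      exact hx
    · have hmem : x ∈ P.bd (P.dim x - 1) true U ∪ P.bd (P.dim x - 1) false U := by
        rw [← hs.1 (P.dim x) hpos hk]
        exact ⟨hM true, hM false⟩
      rcases hmem with hmem | hmem <;>
        exact absurd (aux_dim_le_of_mem_bd hmem) (by omega)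
  -- every element of dimension < n has a cover in U
  have excov : ∀ x ∈ U, P.dim x ≠ n → ∃ y ∈ U, x ⋖ y := by
    intro x hxU hxn
    by_contra h
    push_neg at h
    apply hxn
    apply pure x hxU
    intro y hy hle
    by_contra hne
    obtain ⟨z, hcz, hzy⟩ := aux_exists_covby_le (lt_of_le_of_ne hle (Ne.symm hne))
    exact h z (hcl ⟨y, hy, hzy⟩) hcz
  refine ⟨pure, ?_, ?_, ?_, ?_⟩
  · -- disjointness
    ext x
    simp only [Set.mem_inter_iff, Set.mem_empty_iff_false, iff_false, not_and]
    intro hxt hxf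
    obtain ⟨y, hy, hcov⟩ := excov x hxt.1 (by have := hxt.2.1; omega)
    have h1 := hxt.2.2 y hy hcov
    have h2 := hxf.2.2 y hy hcov
    rw [h1] at h2
    exact Bool.noConfusion h2
  · exact aux_sb_nonempty hP hU n hn hd he true
  · exact aux_sb_nonempty hP hU n hn hd he false
  · -- unique covers
    intro x hx
    have hxs : x ∈ U ∧ P.dim x = n - 1 ∧ ∃ α : Bool, ∀ y ∈ U, x ⋖ y → P.orient y x = α := by
      rcases hx with hx | hx
      · exact ⟨hx.1, hx.2.1, true, hx.2.2⟩
      · exact ⟨hx.1, hx.2.1, false, hx.2.2⟩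
    obtain ⟨hxU, hxd, α, hα⟩ := hxs
    obtain ⟨y, hyU, hcov⟩ := excov x hxU (by omega)
    refine ⟨y, ⟨hyU, hcov⟩, ?_⟩
    rintro y' ⟨hy'U, hcov'⟩
    refine aux_cov_unique hU n hd x y' y hy'U hyU hcov' hcov ?_ ?_
    · have := P.graded x y' hcov'; omega
    · rw [hα y' hy'U hcov', hα y hyU hcov]
end

section
/- Let f: P → Q be a C-functor of C-directed complexes and U ⊆ P a molecule. Then f(U) is a molecule of the same dimension as U, ∂^α f(U) = f(∂^α U), and if U decomposes as U₁ #ₖ U₂ then f(U) decomposes as f(U₁) #ₖ f(U₂). -/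
/-- A `C`-functor between directed complexes: a function on closed subsets
preserving unions and binary intersections, commuting with boundaries of
atoms, and sending atoms to `C`-molecules. -/
structure CFun (P Q : OGP) (C : Set Q.carrier → Prop) where
  toFun : Set P.carrier → Set Q.carrier
  map_unions : ∀ S : Set (Set P.carrier), (∀ U ∈ S, P.IsClosed U) →
    toFun (⋃₀ S) = ⋃₀ (toFun '' S)
  map_inter : ∀ U V : Set P.carrier, P.IsClosed U → P.IsClosed V →
    toFun (U ∩ V) = toFun U ∩ toFun V
  map_bd : ∀ (x : P.carrier) (n : ℕ) (α : Bool),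
    Q.bd n α (toFun (P.cl {x})) = toFun (P.bd n α (P.cl {x}))
  atom_mol : ∀ x : P.carrier,
    IsMolecule Q (toFun (P.cl {x})) ∧ C (toFun (P.cl {x}))

/-!
Every molecule `U` of a regular directed complex is *globular*: it is closed, its boundaries are
again globular, and `∂ₙ^α ∂ₘ^β U = ∂ₙ^α U` for `n < m`. For an atom `x` this follows from the
axioms by downward induction on `n`: sphericity, `∂ₙ₊₁⁺x ∩ ∂ₙ₊₁⁻x = ∂ₙx`, lets one compute
`∂ₙ^α x` inside `∂ₙ₊₁⁺ x`, hence inside the globular molecule `∂⁺x`. For a pasting `U₁ #ₖ U₂` it follows from the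
formula expressing `∂ₙ^α (U₁ #ₖ U₂)` through `∂ₙ^α U₁` and `∂ₙ^α U₂` (`pasteBd`).

That formula only involves unions, which `f` preserves on closed sets; intersections are preserved
too, so by induction on molecules `f` commutes with all boundaries and preserves pastings. The
dimension of an atom is preserved by sphericity.
-/

namespace OGP

variable {P : OGP} {U V U₁ U₂ : Set P.carrier} {x y : P.carrier} {k m n : ℕ} {α β γ : Bool}

theorem mem_cl_singleton : x ∈ P.cl {y} ↔ x ≤ y := by
  simp [cl]

theorem self_mem_cl_singleton (x : P.carrier) : x ∈ P.cl {x} := mem_cl_singleton.2 le_rfl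

theorem isClosed_cl (U : Set P.carrier) : P.IsClosed (P.cl U) :=
  fun _ ⟨_, ⟨z, hz, hyz⟩, hxy⟩ => ⟨z, hz, hxy.trans hyz⟩

theorem IsClosed.mem_of_le (hU : P.IsClosed U) (hxy : x ≤ y) (hy : y ∈ U) : x ∈ U :=
  hU ⟨y, hy, hxy⟩

theorem IsClosed.union (hU : P.IsClosed U) (hV : P.IsClosed V) : P.IsClosed (U ∪ V) :=
  fun _ ⟨_, hy, hxy⟩ => hy.imp (hU.mem_of_le hxy) (hV.mem_of_le hxy)

theorem IsClosed.eq_cl_singleton (hU : P.IsClosed U) (hx : x ∈ U) (hmax : ∀ y ∈ U, y ≤ x) :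
    U = P.cl {x} :=
  Set.ext fun _ => ⟨fun hy => mem_cl_singleton.2 (hmax _ hy),
    fun hy => hU.mem_of_le (mem_cl_singleton.1 hy) hx⟩

theorem dim_lt_of_lt (h : x < y) : P.dim x < P.dim y := by
  induction x using WellFoundedGT.induction with
  | _ x ih =>
    obtain ⟨z, hxz, hzy⟩ := exists_covBy_le_of_lt h
    have hz := P.graded x z hxz
    rcases hzy.eq_or_lt with rfl | hzy
    · omega
    · have := ih z hxz.lt hzy
      omega

theorem dim_le_of_le (h : x ≤ y) : P.dim x ≤ P.dim y :=
  h.eq_or_lt.elim (fun h => h ▸ le_rfl) fun h => (dim_lt_of_lt h).le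

theorem eq_of_le_of_dim_le (h : x ≤ y) (hd : P.dim y ≤ P.dim x) : x = y :=
  h.eq_or_lt.resolve_right fun h => (dim_lt_of_lt h).not_ge hd

theorem covBy_of_le_of_dim_eq (h : x ≤ y) (hd : P.dim y = P.dim x + 1) : x ⋖ y :=
  ⟨h.lt_of_ne (by rintro rfl; omega), fun w hxw hwy => by
    have := dim_lt_of_lt hxw
    have := dim_lt_of_lt hwy
    omega⟩

theorem dim_le_sdim (hx : x ∈ U) : P.dim x ≤ P.sdim U :=
  le_csSup (Set.toFinite _).bddAbove ⟨x, hx, rfl⟩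

theorem sdim_le (h : ∀ x ∈ U, P.dim x ≤ n) : P.sdim U ≤ n := by
  rcases U.eq_empty_or_nonempty with rfl | hU
  · simp [sdim]
  · exact csSup_le (hU.image _) (Set.forall_mem_image.2 h)

theorem sdim_mono (h : U ⊆ V) : P.sdim U ≤ P.sdim V :=
  sdim_le fun _ hx => dim_le_sdim (h hx)

theorem sdim_union (U V : Set P.carrier) : P.sdim (U ∪ V) = max (P.sdim U) (P.sdim V) :=
  (sdim_le fun _ hx => hx.elim (fun h => le_max_of_le_left (dim_le_sdim h))
      fun h => le_max_of_le_right (dim_le_sdim h)).antisymm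
    (max_le (sdim_mono Set.subset_union_left) (sdim_mono Set.subset_union_right))

theorem sdim_cl_singleton (x : P.carrier) : P.sdim (P.cl {x}) = P.dim x :=
  (sdim_le fun _ hy => dim_le_of_le (mem_cl_singleton.1 hy)).antisymm
    (dim_le_sdim (self_mem_cl_singleton x))

/-- The second part of the boundary: `P.bd n α U = P.cl (P.sb n α U) ∪ P.maxLe n U`. -/
def maxLe (P : OGP) (n : ℕ) (U : Set P.carrier) : Set P.carrier :=
  {x | x ∈ U ∧ ∀ y ∈ U, x ≤ y → P.dim y ≤ n}

theorem mem_bd_of_mem_sb (hx : x ∈ P.sb n α U) : x ∈ P.bd n α U := Or.inl ⟨x, hx, le_rfl⟩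

theorem mem_sb_of_subset (hx : x ∈ P.sb n α U) (hVU : V ⊆ U) (hxV : x ∈ V) : x ∈ P.sb n α V :=
  ⟨hxV, hx.2.1, fun y hy => hx.2.2 y (hVU hy)⟩

theorem mem_maxLe_of_subset (hx : x ∈ P.maxLe n U) (hVU : V ⊆ U) (hxV : x ∈ V) :
    x ∈ P.maxLe n V :=
  ⟨hxV, fun y hy => hx.2 y (hVU hy)⟩

theorem bd_subset (hU : P.IsClosed U) : P.bd n α U ⊆ U := by
  rintro x (⟨z, hz, hxz⟩ | hx)
  exacts [hU.mem_of_le hxz hz.1, hx.1]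

theorem dim_le_of_mem_bd (hx : x ∈ P.bd n α U) : P.dim x ≤ n := by
  rcases hx with ⟨z, hz, hxz⟩ | hx
  exacts [hz.2.1 ▸ dim_le_of_le hxz, hx.2 x hx.1 le_rfl]

theorem sdim_bd_le : P.sdim (P.bd n α U) ≤ n :=
  sdim_le fun _ => dim_le_of_mem_bd

theorem bd_eq_self (hU : P.IsClosed U) (h : P.sdim U ≤ n) : P.bd n α U = U :=
  (bd_subset hU).antisymm fun _ hx => Or.inr ⟨hx, fun _ hy _ => (dim_le_sdim hy).trans h⟩

theorem mem_sb_of_mem_bd (hx : x ∈ P.bd n α U) (hd : P.dim x = n) : x ∈ P.sb n α U := by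
  rcases hx with ⟨z, hz, hxz⟩ | ⟨hxU, hmax⟩
  · obtain rfl := eq_of_le_of_dim_le hxz (hz.2.1.trans hd.symm).le
    exact hz
  · refine ⟨hxU, hd, fun y hy hxy => absurd (hmax y hy hxy.le) ?_⟩
    have := P.graded _ _ hxy
    omega

theorem bd_cl_singleton_of_lt (hn : n < P.dim x) :
    P.bd n α (P.cl {x}) = P.cl (P.sb n α (P.cl {x})) :=
  Set.union_eq_left.2 fun _ hy => absurd (hy.2 x (self_mem_cl_singleton x)
    (mem_cl_singleton.1 hy.1)) (by omega)

theorem isClosed_bd_cl_singleton (x : P.carrier) (n : ℕ) (α : Bool) :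
    P.IsClosed (P.bd n α (P.cl {x})) := by
  rcases lt_or_ge n (P.dim x) with hn | hn
  · rw [bd_cl_singleton_of_lt hn]
    exact isClosed_cl _
  · rw [bd_eq_self (isClosed_cl _) (sdim_cl_singleton x ▸ hn)]
    exact isClosed_cl _

theorem bd_union_subset : P.bd n α (U₁ ∪ U₂) ⊆ P.bd n α U₁ ∪ P.bd n α U₂ := by
  rintro x (⟨z, hz, hxz⟩ | hx)
  · exact hz.1.imp (fun h => Or.inl ⟨z, mem_sb_of_subset hz Set.subset_union_left h, hxz⟩)
      fun h => Or.inl ⟨z, mem_sb_of_subset hz Set.subset_union_right h, hxz⟩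
  · exact hx.1.imp (fun h => Or.inr (mem_maxLe_of_subset hx Set.subset_union_left h))
      fun h => Or.inr (mem_maxLe_of_subset hx Set.subset_union_right h)

theorem bd_union_subset_right (h : P.bd n α U₁ ⊆ U₂) :
    P.bd n α (U₁ ∪ U₂) ⊆ P.bd n α U₂ := by
  rintro x (⟨z, hz, hxz⟩ | hx)
  · have hz₂ : z ∈ U₂ :=
      hz.1.elim (fun h₁ => h (mem_bd_of_mem_sb (mem_sb_of_subset hz Set.subset_union_left h₁))) id
    exact Or.inl ⟨z, mem_sb_of_subset hz Set.subset_union_right hz₂, hxz⟩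
  · have hx₂ : x ∈ U₂ :=
      hx.1.elim (fun h₁ => h (Or.inr (mem_maxLe_of_subset hx Set.subset_union_left h₁))) id
    exact Or.inr (mem_maxLe_of_subset hx Set.subset_union_right hx₂)

theorem bd_subset_bd_union (hU₂ : P.IsClosed U₂) (h : U₂ ∩ P.bd n α U₁ ⊆ P.bd n α U₂) :
    P.bd n α U₁ ⊆ P.bd n α (U₁ ∪ U₂) := by
  rintro x (⟨z, hz, hxz⟩ | ⟨hx₁, hmax₁⟩)
  · refine Or.inl ⟨z, ⟨Or.inl hz.1, hz.2.1, fun w hw hzw => hw.elim (hz.2.2 w · hzw) fun hw₂ => ?_⟩,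
      hxz⟩
    have hz₂ : z ∈ P.bd n α U₂ := h ⟨hU₂.mem_of_le hzw.le hw₂, mem_bd_of_mem_sb hz⟩
    exact (mem_sb_of_mem_bd hz₂ hz.2.1).2.2 w hw₂ hzw
  by_cases hx₂ : x ∈ U₂
  · rcases h ⟨hx₂, Or.inr ⟨hx₁, hmax₁⟩⟩ with ⟨z, hz, hxz⟩ | ⟨-, hmax₂⟩
    · refine Or.inl ⟨z, ⟨Or.inr hz.1, hz.2.1,
        fun w hw hzw => hw.elim (fun hw₁ => ?_) (hz.2.2 w · hzw)⟩, hxz⟩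
      have := hmax₁ w hw₁ (hxz.trans hzw.le)
      have := P.graded _ _ hzw
      have := hz.2.1
      omega
    · exact Or.inr ⟨Or.inl hx₁, fun y hy => hy.elim (hmax₁ y) (hmax₂ y)⟩
  · exact Or.inr ⟨Or.inl hx₁, fun y hy hxy =>
      hy.elim (hmax₁ y · hxy) fun hy₂ => absurd (hU₂.mem_of_le hxy hy₂) hx₂⟩

def Pastable (P : OGP) (k : ℕ) (U₁ U₂ : Set P.carrier) : Prop :=
  U₁ ∩ U₂ = P.bd k true U₁ ∧ U₁ ∩ U₂ = P.bd k false U₂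

inductive IsGlobular (P : OGP) : Set P.carrier → Prop
  | intro (U : Set P.carrier) (isClosed : P.IsClosed U)
      (bd_of_lt : ∀ n α, n < P.sdim U → IsGlobular P (P.bd n α U))
      (bd_bd : ∀ n m α β, n < m → P.bd n α (P.bd m β U) = P.bd n α U) : IsGlobular P U

namespace IsGlobular

theorem isClosed (h : P.IsGlobular U) : P.IsClosed U := by
  cases h with | intro _ hU _ _ => exact hU

theorem bd_bd (h : P.IsGlobular U) (hnm : n < m) (α β : Bool) :
    P.bd n α (P.bd m β U) = P.bd n α U := by
  cases h with | intro _ _ _ hbd => exact hbd n m α β hnm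

theorem bd (h : P.IsGlobular U) (n : ℕ) (α : Bool) : P.IsGlobular (P.bd n α U) := by
  rcases lt_or_ge n (P.sdim U) with hn | hn
  · cases h with | intro _ _ hbd _ => exact hbd n α hn
  · rwa [bd_eq_self h.isClosed hn]

theorem isClosed_bd (h : P.IsGlobular U) (n : ℕ) (α : Bool) : P.IsClosed (P.bd n α U) :=
  (h.bd n α).isClosed

theorem bd_subset_bd (h : P.IsGlobular U) (hnm : n < m) (α β : Bool) :
    P.bd n α U ⊆ P.bd m β U :=
  h.bd_bd hnm α β ▸ bd_subset (h.isClosed_bd m β)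

end IsGlobular

def pasteBd {X : Type*} (k n : ℕ) (α : Bool) (B₁ B₂ : Set X) : Set X :=
  if n < k then B₁ else if k < n then B₁ ∪ B₂ else if α then B₂ else B₁

namespace Pastable

theorem bd_union_of_lt (hp : P.Pastable k U₁ U₂) (h₁ : P.IsGlobular U₁) (h₂ : P.IsGlobular U₂)
    (hkn : k < n) : P.bd n α (U₁ ∪ U₂) = P.bd n α U₁ ∪ P.bd n α U₂ := by
  refine bd_union_subset.antisymm (Set.union_subset ?_ ?_)
  · refine bd_subset_bd_union h₂.isClosed fun x ⟨hx₂, hx₁⟩ => ?_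
    exact h₂.bd_subset_bd hkn false α (hp.2 ▸ ⟨bd_subset h₁.isClosed hx₁, hx₂⟩)
  · rw [Set.union_comm]
    refine bd_subset_bd_union h₁.isClosed fun x ⟨hx₁, hx₂⟩ => ?_
    exact h₁.bd_subset_bd hkn true α (hp.1 ▸ ⟨hx₁, bd_subset h₂.isClosed hx₂⟩)

theorem bd_union_true (hp : P.Pastable k U₁ U₂) (hU₁ : P.IsClosed U₁) (hU₂ : P.IsClosed U₂) :
    P.bd k true (U₁ ∪ U₂) = P.bd k true U₂ := by
  refine (bd_union_subset_right (hp.1 ▸ Set.inter_subset_right)).antisymm ?_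
  rw [Set.union_comm]
  exact bd_subset_bd_union hU₁ fun x ⟨hx₁, hx₂⟩ => hp.1 ▸ ⟨hx₁, bd_subset hU₂ hx₂⟩

theorem bd_union_false (hp : P.Pastable k U₁ U₂) (hU₁ : P.IsClosed U₁) (hU₂ : P.IsClosed U₂) :
    P.bd k false (U₁ ∪ U₂) = P.bd k false U₁ := by
  refine (Set.union_comm U₁ U₂ ▸ bd_union_subset_right (hp.2 ▸ Set.inter_subset_left)).antisymm ?_
  exact bd_subset_bd_union hU₂ fun x ⟨hx₂, hx₁⟩ => hp.2 ▸ ⟨bd_subset hU₁ hx₁, hx₂⟩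

theorem bd_left_eq_bd_right (hp : P.Pastable k U₁ U₂) (h₁ : P.IsGlobular U₁)
    (h₂ : P.IsGlobular U₂) (hnk : n < k) (α : Bool) : P.bd n α U₁ = P.bd n α U₂ := by
  rw [← h₁.bd_bd hnk α true, ← hp.1, hp.2, h₂.bd_bd hnk]

theorem bd_union_of_gt (hp : P.Pastable k U₁ U₂) (h₁ : P.IsGlobular U₁) (h₂ : P.IsGlobular U₂)
    (hnk : n < k) (α : Bool) : P.bd n α (U₁ ∪ U₂) = P.bd n α U₁ := by
  have hbd := hp.bd_left_eq_bd_right h₁ h₂ hnk α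
  refine (bd_union_subset.trans (by rw [hbd, Set.union_self])).antisymm ?_
  exact bd_subset_bd_union h₂.isClosed fun x hx => hbd ▸ hx.2

theorem bd_union (hp : P.Pastable k U₁ U₂) (h₁ : P.IsGlobular U₁) (h₂ : P.IsGlobular U₂)
    (n : ℕ) (α : Bool) : P.bd n α (U₁ ∪ U₂) = pasteBd k n α (P.bd n α U₁) (P.bd n α U₂) := by
  unfold pasteBd
  split_ifs with hnk hkn hα
  · exact hp.bd_union_of_gt h₁ h₂ hnk α
  · exact hp.bd_union_of_lt h₁ h₂ hkn
  · obtain rfl : n = k := by omega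
    rw [hα]
    exact hp.bd_union_true h₁.isClosed h₂.isClosed
  · obtain rfl : n = k := by omega
    rw [Bool.eq_false_iff.2 hα]
    exact hp.bd_union_false h₁.isClosed h₂.isClosed

theorem bd (hp : P.Pastable k U₁ U₂) (h₁ : P.IsGlobular U₁) (h₂ : P.IsGlobular U₂)
    (hkm : k < m) (β : Bool) : P.Pastable k (P.bd m β U₁) (P.bd m β U₂) := by
  have hinter : P.bd m β U₁ ∩ P.bd m β U₂ = U₁ ∩ U₂ :=
    (Set.inter_subset_inter (bd_subset h₁.isClosed) (bd_subset h₂.isClosed)).antisymm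
      fun x hx => ⟨h₁.bd_subset_bd hkm true β (hp.1 ▸ hx), h₂.bd_subset_bd hkm false β (hp.2 ▸ hx)⟩
  exact ⟨by rw [hinter, hp.1, h₁.bd_bd hkm], by rw [hinter, hp.2, h₂.bd_bd hkm]⟩

theorem bd_union_eq_or (hp : P.Pastable k U₁ U₂) (h₁ : P.IsGlobular U₁)
    (h₂ : P.IsGlobular U₂) (hmk : m ≤ k) (β : Bool) :
    P.bd m β (U₁ ∪ U₂) = P.bd m β U₁ ∨ P.bd m β (U₁ ∪ U₂) = P.bd m β U₂ := by
  rw [hp.bd_union h₁ h₂]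
  unfold pasteBd
  split_ifs <;> first | omega | simp

end Pastable

theorem IsGlobular.union (h₁ : P.IsGlobular U₁) (h₂ : P.IsGlobular U₂)
    (hp : P.Pastable k U₁ U₂) : P.IsGlobular (U₁ ∪ U₂) := by
  induction hN : P.sdim (U₁ ∪ U₂) using Nat.strong_induction_on generalizing U₁ U₂ with
  | _ N ih =>
  refine .intro _ (h₁.isClosed.union h₂.isClosed) (fun m β hm => ?_) (fun n m α β hnm => ?_)
  · rcases le_or_gt m k with hmk | hkm
    · rcases hp.bd_union_eq_or h₁ h₂ hmk β with h | h <;> rw [h]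
      exacts [h₁.bd m β, h₂.bd m β]
    · rw [hp.bd_union_of_lt h₁ h₂ hkm]
      have hdim : P.sdim (P.bd m β U₁ ∪ P.bd m β U₂) ≤ m := by
        rw [sdim_union]
        exact max_le sdim_bd_le sdim_bd_le
      exact ih _ (by omega) (h₁.bd m β) (h₂.bd m β) (hp.bd h₁ h₂ hkm β) rfl
  · rcases le_or_gt m k with hmk | hkm
    · rw [hp.bd_union_of_gt h₁ h₂ (hnm.trans_le hmk)]
      rcases hp.bd_union_eq_or h₁ h₂ hmk β with h | h <;> rw [h]
      · exact h₁.bd_bd hnm α β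
      · rw [h₂.bd_bd hnm, hp.bd_left_eq_bd_right h₁ h₂ (hnm.trans_le hmk)]
    · rw [hp.bd_union_of_lt h₁ h₂ hkm, (hp.bd h₁ h₂ hkm β).bd_union (h₁.bd m β) (h₂.bd m β),
        h₁.bd_bd hnm, h₂.bd_bd hnm, hp.bd_union h₁ h₂]

theorem bd_cl_singleton_eq_bd_bd (hm : m + 1 < P.dim x)
    (hsph : P.bd (m + 1) true (P.cl {x}) ∩ P.bd (m + 1) false (P.cl {x}) =
      P.bd m true (P.cl {x}) ∪ P.bd m false (P.cl {x}))
    (hsub : P.bd m γ (P.bd (m + 1) true (P.cl {x})) ⊆ P.bd (m + 1) false (P.cl {x})) :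
    P.bd m γ (P.cl {x}) = P.bd m γ (P.bd (m + 1) true (P.cl {x})) := by
  have hW := bd_cl_singleton_of_lt (α := true) hm
  apply subset_antisymm
  · rw [bd_cl_singleton_of_lt (by omega : m < P.dim x)]
    rintro y ⟨z, hz, hyz⟩
    have hzW : z ∈ P.bd m true (P.cl {x}) ∪ P.bd m false (P.cl {x}) := by
      cases γ
      exacts [Or.inr (mem_bd_of_mem_sb hz), Or.inl (mem_bd_of_mem_sb hz)]
    rw [← hsph] at hzW
    exact Or.inl ⟨z, mem_sb_of_subset hz (bd_subset (isClosed_cl _)) hzW.1, hyz⟩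
  rintro y (⟨z, hz, hyz⟩ | ⟨hyW, hmax⟩)
  · obtain ⟨u, hu, hzu⟩ := hW ▸ hz.1
    have hzu : z ⋖ u := covBy_of_le_of_dim_eq hzu (by rw [hu.2.1, hz.2.1])
    -- `z` lies in `∂ₘ^δ x` for some `δ`, and `δ` is the orientation of `z ⋖ u`, which is `γ`
    have hzX : z ∈ P.bd m true (P.cl {x}) ∪ P.bd m false (P.cl {x}) :=
      hsph ▸ ⟨hz.1, hsub (mem_bd_of_mem_sb hz)⟩
    obtain ⟨δ, hδ⟩ : ∃ δ, z ∈ P.sb m δ (P.cl {x}) :=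
      hzX.elim (⟨true, mem_sb_of_mem_bd · hz.2.1⟩) (⟨false, mem_sb_of_mem_bd · hz.2.1⟩)
    obtain rfl : δ = γ :=
      (hδ.2.2 u hu.1 hzu).symm.trans (hz.2.2 u (hW ▸ ⟨u, hu, le_rfl⟩) hzu)
    exact (isClosed_bd_cl_singleton x m δ).mem_of_le hyz (mem_bd_of_mem_sb hδ)
  · obtain ⟨u, hu, hyu⟩ := hW ▸ hyW
    have := hmax u (hW ▸ ⟨u, hu, le_rfl⟩) hyu
    have := hu.2.1
    omega

theorem bd_cl_singleton_eq_of_succ (hx : HasSphericalBoundary P (P.dim x) (P.cl {x}))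
    (hV : P.IsGlobular V) (hm : m + 1 < P.dim x)
    (h : ∀ δ, P.bd (m + 1) δ (P.cl {x}) = P.bd (m + 1) δ V) (γ : Bool) :
    P.bd m γ (P.cl {x}) = P.bd m γ V := by
  have hglob : P.bd m γ (P.bd (m + 1) true V) = P.bd m γ V := hV.bd_bd (by omega) γ true
  have hsph := hx.1 (m + 1) (by omega) hm
  rw [Nat.add_sub_cancel] at hsph
  rw [bd_cl_singleton_eq_bd_bd hm hsph (by rw [h, h, hglob]; exact hV.bd_subset_bd (by omega) _ _),
    h, hglob]

theorem bd_cl_singleton_eq_bd_bdx (hP : IsRegularDC P) (hV : P.IsGlobular (P.bdx β x))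
    (hm : m < P.dim x - 1) (γ : Bool) : P.bd m γ (P.cl {x}) = P.bd m γ (P.bdx β x) := by
  have hx : 1 < P.dim x := by omega
  have hm' : m ≤ P.dim x - 2 := by omega
  clear hm
  induction hm' using Nat.decreasingInduction generalizing γ with
  | self => exact ((hP.1 x γ).2 hx β).symm
  | of_succ m hm ih => exact bd_cl_singleton_eq_of_succ (hP.2 x) hV (by omega) ih γ

theorem isGlobular_cl_singleton (hP : IsRegularDC P) (x : P.carrier)
    (ih : ∀ V, IsMolecule P V → P.sdim V < P.dim x → P.IsGlobular V) :
    P.IsGlobular (P.cl {x}) := by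
  have hV : 0 < P.dim x → ∀ β, P.IsGlobular (P.bdx β x) := fun hx β =>
    ih _ (hP.1 x β).1 (sdim_bd_le.trans_lt (by omega))
  refine .intro _ (isClosed_cl _) (fun n α hn => ?_) (fun n m α β hnm => ?_)
  · rw [sdim_cl_singleton] at hn
    rcases (Nat.le_sub_one_of_lt hn).eq_or_lt with rfl | hn
    · exact hV (by omega) α
    · rw [bd_cl_singleton_eq_bd_bdx hP (hV (by omega) true) hn]
      exact (hV (by omega) true).bd n α
  rcases lt_or_ge m (P.dim x) with hm | hm
  · rcases (Nat.le_sub_one_of_lt hm).eq_or_lt with rfl | hm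
    · exact (bd_cl_singleton_eq_bd_bdx hP (hV (by omega) β) hnm α).symm
    · have hV := hV (by omega) true
      rw [bd_cl_singleton_eq_bd_bdx hP hV hm, hV.bd_bd hnm,
        ← bd_cl_singleton_eq_bd_bdx hP hV (hnm.trans hm)]
  · rw [bd_eq_self (isClosed_cl _) (sdim_cl_singleton x ▸ hm)]

end OGP

namespace IsMolecule

open OGP

variable {P : OGP} {U U₁ U₂ : Set P.carrier} {k : ℕ}

@[elab_as_elim]
theorem induction_on_atoms {motive : ∀ U, IsMolecule P U → Prop} (hU : IsMolecule P U)
    (atom : ∀ x (h : IsMolecule P (P.cl {x})), motive (P.cl {x}) h)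
    (paste : ∀ U₁ U₂ k (h₁ : IsMolecule P U₁) (h₂ : IsMolecule P U₂), P.Pastable k U₁ U₂ →
      ∀ h : IsMolecule P (U₁ ∪ U₂), motive U₁ h₁ → motive U₂ h₂ → motive (U₁ ∪ U₂) h) :
    motive U hU := by
  induction hU with
  | atom _ hU hx =>
    obtain ⟨x, hx, hmax⟩ := hx
    obtain rfl := hU.eq_cl_singleton hx hmax
    exact atom x _
  | paste U₁ U₂ k h₁ h₂ hW₁ hW₂ _ _ ih₁ ih₂ => exact paste U₁ U₂ k h₁ h₂ ⟨hW₁, hW₂⟩ _ ih₁ ih₂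

theorem isClosed (hU : IsMolecule P U) : P.IsClosed U := by
  induction hU using induction_on_atoms with
  | atom x _ => exact isClosed_cl _
  | paste _ _ _ _ _ _ _ ih₁ ih₂ => exact ih₁.union ih₂

theorem nonempty (hU : IsMolecule P U) : U.Nonempty := by
  induction hU using induction_on_atoms with
  | atom x _ => exact ⟨x, self_mem_cl_singleton x⟩
  | paste _ _ _ _ _ _ _ ih₁ _ => exact ih₁.mono Set.subset_union_left

theorem union (h₁ : IsMolecule P U₁) (h₂ : IsMolecule P U₂) (hp : P.Pastable k U₁ U₂) :
    IsMolecule P (U₁ ∪ U₂) := by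
  by_cases e₁ : U₁ = U₁ ∪ U₂
  · rwa [← e₁]
  by_cases e₂ : U₂ = U₁ ∪ U₂
  · rwa [← e₂]
  exact .paste U₁ U₂ k h₁ h₂ hp.1 hp.2 e₁ e₂

theorem isGlobular (hP : IsRegularDC P) (hU : IsMolecule P U) : P.IsGlobular U := by
  induction hN : P.sdim U using Nat.strong_induction_on generalizing U with
  | _ N ih =>
  suffices ∀ V, IsMolecule P V → P.sdim V ≤ N → P.IsGlobular V from this U hU hN.le
  intro V hV
  induction hV using induction_on_atoms with
  | atom x _ =>
    exact fun hx => isGlobular_cl_singleton hP x fun W hW hWx =>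
      ih _ ((sdim_cl_singleton x ▸ hWx).trans_le hx) hW rfl
  | paste U₁ U₂ k _ _ hp _ ih₁ ih₂ =>
    intro h
    rw [sdim_union] at h
    exact (ih₁ (le_of_max_le_left h)).union (ih₂ (le_of_max_le_right h)) hp

end IsMolecule

namespace CFun

open OGP

variable {P Q : OGP} {C : Set Q.carrier → Prop} (f : CFun P Q C) {U U₁ U₂ B₁ B₂ : Set P.carrier}
  {x : P.carrier} {k n : ℕ} {α : Bool}

theorem map_empty : f.toFun ∅ = ∅ := by
  simpa using f.map_unions ∅ (by simp)

theorem map_union (hU₁ : P.IsClosed U₁) (hU₂ : P.IsClosed U₂) :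
    f.toFun (U₁ ∪ U₂) = f.toFun U₁ ∪ f.toFun U₂ := by
  simpa [Set.image_pair] using f.map_unions {U₁, U₂} (by rintro U (rfl | rfl) <;> assumption)

theorem map_pasteBd (hB₁ : P.IsClosed B₁) (hB₂ : P.IsClosed B₂) :
    f.toFun (pasteBd k n α B₁ B₂) = pasteBd k n α (f.toFun B₁) (f.toFun B₂) := by
  unfold pasteBd
  split_ifs <;> simp only [f.map_union hB₁ hB₂]

theorem pastable_map (hU₁ : P.IsClosed U₁) (hU₂ : P.IsClosed U₂) (hp : P.Pastable k U₁ U₂)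
    (hbd₁ : Q.bd k true (f.toFun U₁) = f.toFun (P.bd k true U₁))
    (hbd₂ : Q.bd k false (f.toFun U₂) = f.toFun (P.bd k false U₂)) :
    Q.Pastable k (f.toFun U₁) (f.toFun U₂) :=
  ⟨by rw [← f.map_inter _ _ hU₁ hU₂, hp.1, hbd₁], by rw [← f.map_inter _ _ hU₁ hU₂, hp.2, hbd₂]⟩

/-- If `f(x)` had dimension `s < dim x`, sphericity would make `f(x) = f(∂ₛ⁺x ∩ ∂ₛ⁻x)` equal to
`∂ₛ₋₁⁺ f(x) ∪ ∂ₛ₋₁⁻ f(x)`, or empty if `s = 0`. -/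
theorem sdim_map_cl_singleton (hx : HasSphericalBoundary P (P.dim x) (P.cl {x})) :
    Q.sdim (f.toFun (P.cl {x})) = P.dim x := by
  set X := f.toFun (P.cl {x})
  have hX := (f.atom_mol x).1
  have hle : Q.sdim X ≤ P.dim x := by
    have := bd_eq_self (α := true) (isClosed_cl {x}) (sdim_cl_singleton x).le
    exact (congrArg Q.sdim (by rw [f.map_bd, this])).trans_le sdim_bd_le
  refine hle.antisymm (not_lt.1 fun hlt => ?_)
  set s := Q.sdim X
  have hinter : X = f.toFun (P.bd s true (P.cl {x}) ∩ P.bd s false (P.cl {x})) := by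
    rw [f.map_inter _ _ (isClosed_bd_cl_singleton x s true) (isClosed_bd_cl_singleton x s false),
      ← f.map_bd, ← f.map_bd, bd_eq_self hX.isClosed le_rfl, bd_eq_self hX.isClosed le_rfl,
      Set.inter_self]
  rcases Nat.eq_zero_or_pos s with hs | hs
  · rw [hs, hx.2 (by omega), f.map_empty] at hinter
    exact hX.nonempty.ne_empty hinter
  · rw [hx.1 s hs hlt, f.map_union (isClosed_bd_cl_singleton x _ _)
      (isClosed_bd_cl_singleton x _ _), ← f.map_bd, ← f.map_bd] at hinter
    have : s ≤ s - 1 := calc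
      s = Q.sdim X := rfl
      _ ≤ s - 1 := by
        rw [hinter, sdim_union]
        exact max_le sdim_bd_le sdim_bd_le
    omega

theorem sdim_map (hP : ∀ x, HasSphericalBoundary P (P.dim x) (P.cl {x}))
    (hU : IsMolecule P U) : Q.sdim (f.toFun U) = P.sdim U := by
  induction hU using IsMolecule.induction_on_atoms with
  | atom x _ => rw [f.sdim_map_cl_singleton (hP x), sdim_cl_singleton]
  | paste U₁ U₂ k h₁ h₂ _ _ ih₁ ih₂ =>
    rw [f.map_union h₁.isClosed h₂.isClosed, sdim_union, sdim_union, ih₁, ih₂]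

theorem isMolecule_map_and_map_bd (hP : IsRegularDC P) (hQ : IsRegularDC Q)
    (hU : IsMolecule P U) :
    IsMolecule Q (f.toFun U) ∧ ∀ n α, Q.bd n α (f.toFun U) = f.toFun (P.bd n α U) := by
  induction hU using IsMolecule.induction_on_atoms with
  | atom x _ => exact ⟨(f.atom_mol x).1, f.map_bd x⟩
  | paste U₁ U₂ k h₁ h₂ hp _ ih₁ ih₂ =>
    have hg₁ := h₁.isGlobular hP
    have hg₂ := h₂.isGlobular hP
    have hfp := f.pastable_map h₁.isClosed h₂.isClosed hp (ih₁.2 k true) (ih₂.2 k false)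
    rw [f.map_union h₁.isClosed h₂.isClosed]
    refine ⟨ih₁.1.union ih₂.1 hfp, fun n α => ?_⟩
    rw [hfp.bd_union (ih₁.1.isGlobular hQ) (ih₂.1.isGlobular hQ), ih₁.2, ih₂.2,
      hp.bd_union hg₁ hg₂, f.map_pasteBd (hg₁.isClosed_bd n α) (hg₂.isClosed_bd n α)]

end CFun

/-- a `C`-functor sends molecules to molecules of the same
dimension, commutes with boundaries, and preserves pasting decompositions. -/
theorem stmt15 (P Q : OGP) (hP : IsRegularDC P) (hQ : IsRegularDC Q)
    (C : Set Q.carrier → Prop) (f : CFun P Q C)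
    (U : Set P.carrier) (hU : IsMolecule P U) :
    IsMolecule Q (f.toFun U) ∧
    Q.sdim (f.toFun U) = P.sdim U ∧
    (∀ α : Bool,
      Q.bd (P.sdim U - 1) α (f.toFun U) = f.toFun (P.bd (P.sdim U - 1) α U)) ∧
    (∀ (U₁ U₂ : Set P.carrier) (k : ℕ),
      IsMolecule P U₁ → IsMolecule P U₂ → U = U₁ ∪ U₂ →
      U₁ ∩ U₂ = P.bd k true U₁ → U₁ ∩ U₂ = P.bd k false U₂ →
      f.toFun U = f.toFun U₁ ∪ f.toFun U₂ ∧
      f.toFun U₁ ∩ f.toFun U₂ = Q.bd k true (f.toFun U₁) ∧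
      f.toFun U₁ ∩ f.toFun U₂ = Q.bd k false (f.toFun U₂)) := by
  obtain ⟨hmol, hbd⟩ := f.isMolecule_map_and_map_bd hP hQ hU
  refine ⟨hmol, f.sdim_map hP.2 hU, fun α => hbd _ α, ?_⟩
  rintro U₁ U₂ k h₁ h₂ rfl hW₁ hW₂
  exact ⟨f.map_union h₁.isClosed h₂.isClosed,
    f.pastable_map h₁.isClosed h₂.isClosed ⟨hW₁, hW₂⟩
      ((f.isMolecule_map_and_map_bd hP hQ h₁).2 k true)
      ((f.isMolecule_map_and_map_bd hP hQ h₂).2 k false)⟩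
end
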